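/- A composition function f satisfying the non-starvation condition — whenever f(s₁,…,s_k) = M and some s_i ∉ F, there exists j ∈ M with s_j ∉ F — is fair: for any k terminating executions of T there is an execution of T^f projecting onto all of them. -/

import Mathlib

/-- Transition relation of the composed system `T^f`. -/
def compStep {S : Type*} {k : ℕ} (R : S → S → Prop)
    (f : (Fin k → S) → Finset (Fin k)) (x x' : Fin k → S) : Prop :=
  (∀ i ∈ f x, R (x i) (x' i)) ∧ ∀ i ∉ f x, x' i = x i

/-- A terminating execution of `T = (S, R, F)`. -/
def Terminating {S : Type*} (R : S → S → Prop) (F : Set S) (l : List S) : Prop :=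
  l.Chain' R ∧ ∃ t, l.getLast? = some t ∧ t ∈ F

section Helpers

variable {α : Type*} [DecidableRel (fun a b : α => a ≠ b)]

lemma destutter'_head? (a : α) (l : List α) :
    (l.destutter' (· ≠ ·) a).head? = some a := by
  induction l generalizing a with
  | nil => simp
  | cons b t ih =>
    rw [List.destutter'_cons]
    split_ifs with h
    · simp
    · exact ih a

lemma destutter'_eq_of_head? {a : α} {l : List α}
    (h : (l.destutter (· ≠ ·)).head? = some a) :
    l.destutter' (· ≠ ·) a = l.destutter (· ≠ ·) := by
  cases l with
  | nil => simp at h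
  | cons b t =>
    rw [List.destutter_cons'] at h ⊢
    rw [destutter'_head? b t] at h
    obtain rfl : a = b := by simpa using h.symm
    rw [List.destutter'_cons_neg (l := t) (show ¬ a ≠ a by simp)]

lemma destutter'_eq_cons_of_head? {a : α} {l : List α}
    (h : (l.destutter (· ≠ ·)).head? ≠ some a) :
    l.destutter' (· ≠ ·) a = a :: l.destutter (· ≠ ·) := by
  cases l with
  | nil => simp
  | cons b t =>
    rw [List.destutter_cons'] at h ⊢
    rw [destutter'_head? b t] at h
    have hab : a ≠ b := fun hh => h (by rw [hh])
    rw [List.destutter'_cons_pos (l := t) hab]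

lemma destutter_cons_congr {a : α} {l₁ l₂ : List α}
    (h : l₁.destutter (· ≠ ·) = l₂.destutter (· ≠ ·)) :
    (a :: l₁).destutter (· ≠ ·) = (a :: l₂).destutter (· ≠ ·) := by
  rw [List.destutter_cons', List.destutter_cons']
  by_cases hh : (l₁.destutter (· ≠ ·)).head? = some a
  · rw [destutter'_eq_of_head? hh, destutter'_eq_of_head? (h ▸ hh), h]
  · rw [destutter'_eq_cons_of_head? hh, destutter'_eq_cons_of_head? (h ▸ hh), h]

lemma destutter_cons_stutter {a : α} {l : List α} (h : l.head? = some a) :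
    (a :: l).destutter (· ≠ ·) = l.destutter (· ≠ ·) := by
  cases l with
  | nil => simp at h
  | cons b t =>
    obtain rfl : a = b := by simpa using h.symm
    rw [List.destutter_cons',
      List.destutter'_cons_neg (l := t) (show ¬ a ≠ a by simp)]
    rfl

lemma destutter_const (a : α) : ∀ t : List α, (∀ b ∈ t, b = a) →
    (a :: t).destutter (· ≠ ·) = [a] := by
  intro t
  induction t with
  | nil => intro _; rfl
  | cons b r ih =>
    intro h
    obtain rfl : b = a := h b (by simp)
    rw [destutter_cons_stutter (by simp)]
    exact ih fun c hc => h c (by simp [hc])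

end Helpers

lemma chain_const {S : Type*} {R : S → S → Prop} {F : Set S}
    (hterm : ∀ s ∈ F, R s s ∧ ∀ t, R s t → t = s) :
    ∀ (t : List S) (a : S), a ∈ F → List.Chain' R (a :: t) → ∀ b ∈ t, b = a := by
  intro t
  induction t with
  | nil => intro a _ _ b hb; simp at hb
  | cons c r ih =>
    intro a ha hc b hb
    obtain ⟨hr, hc'⟩ := List.isChain_cons_cons.1 hc
    have hca : c = a := (hterm a ha).2 c hr
    rcases List.mem_cons.1 hb with rfl | hb
    · exact hca
    · rw [hca] at hc'
      exact ih a ha hc' b hb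

lemma terminating_tail {S : Type*} {R : S → S → Prop} {F : Set S} {a : S} {t : List S}
    (h : Terminating R F (a :: t)) (ht : t ≠ []) : Terminating R F t := by
  obtain ⟨hc, s, hs, hsF⟩ := h
  obtain ⟨c, r, rfl⟩ := List.exists_cons_of_ne_nil ht
  exact ⟨hc.tail, s, by rwa [List.getLast?_cons_cons] at hs, hsF⟩

open Classical in
theorem nonStarving_implies_fair {S : Type*} {k : ℕ} (R : S → S → Prop) (F : Set S)
    (f : (Fin k → S) → Finset (Fin k)) (hf : ∀ x, (f x).Nonempty)
    (hterm : ∀ s ∈ F, R s s ∧ ∀ t, R s t → t = s)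
    (hns : ∀ x : Fin k → S, (∃ i, x i ∉ F) → ∃ j ∈ f x, x j ∉ F) :
    ∀ π : Fin k → List S, (∀ i, Terminating R F (π i)) →
      ∃ L : List (Fin k → S), L.Chain' (compStep R f) ∧
        (∃ xt : Fin k → S, L.getLast? = some xt ∧ ∀ i, xt i ∈ F) ∧
        ∀ i, (L.map (fun x => x i)).destutter (· ≠ ·) = (π i).destutter (· ≠ ·) := by
  have key : ∀ N : ℕ, ∀ (x : Fin k → S) (t : Fin k → List S),
      (∑ i, (t i).length) ≤ N → (∀ i, Terminating R F (x i :: t i)) →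
      ∃ L : List (Fin k → S), L.head? = some x ∧ L.Chain' (compStep R f) ∧
        (∃ xt : Fin k → S, L.getLast? = some xt ∧ ∀ i, xt i ∈ F) ∧
        ∀ i, (L.map (fun y => y i)).destutter (· ≠ ·) = (x i :: t i).destutter (· ≠ ·) := by
    intro N
    induction N using Nat.strong_induction_on with
    | _ N ih =>
    intro x t hN ht
    by_cases hall : ∀ i, x i ∈ F
    · refine ⟨[x], rfl, List.isChain_singleton x, ⟨x, rfl, hall⟩, fun i => ?_⟩
      have hconst : ∀ b ∈ t i, b = x i := chain_const hterm (t i) (x i) (hall i) (ht i).1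
      rw [destutter_const (x i) (t i) hconst]
      rfl
    · push_neg at hall
      obtain ⟨j, hjM, hjF⟩ := hns x hall
      have htj : t j ≠ [] := by
        intro h
        obtain ⟨s, hlast, hsF⟩ := (ht j).2
        rw [h] at hlast
        simp only [List.getLast?_singleton, Option.some.injEq] at hlast
        exact hjF (hlast ▸ hsF)
      set x' : Fin k → S := fun i =>
        if h : i ∈ f x ∧ t i ≠ [] then (t i).head h.2 else x i with hx'
      set t' : Fin k → List S := fun i =>
        if i ∈ f x ∧ t i ≠ [] then (t i).tail else t i with ht'
      have hexec : ∀ i, x' i :: t' i = if i ∈ f x ∧ t i ≠ [] then t i else x i :: t i := by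
        intro i
        by_cases h : i ∈ f x ∧ t i ≠ []
        · simp only [hx', ht', dif_pos h, if_pos h]
          exact List.cons_head_tail h.2
        · simp only [hx', ht', dif_neg h, if_neg h]
      have hterm' : ∀ i, Terminating R F (x' i :: t' i) := by
        intro i
        rw [hexec i]
        by_cases h : i ∈ f x ∧ t i ≠ []
        · rw [if_pos h]; exact terminating_tail (ht i) h.2
        · rw [if_neg h]; exact ht i
      have hlen : ∑ i, (t' i).length < ∑ i, (t i).length := by
        refine Finset.sum_lt_sum (fun i _ => ?_) ⟨j, Finset.mem_univ j, ?_⟩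
        · by_cases h : i ∈ f x ∧ t i ≠ []
          · have : t' i = (t i).tail := by rw [ht']; exact if_pos h
            rw [this, List.length_tail]
            exact Nat.sub_le _ _
          · have : t' i = t i := by rw [ht']; exact if_neg h
            rw [this]
        · have : t' j = (t j).tail := by rw [ht']; exact if_pos ⟨hjM, htj⟩
          rw [this, List.length_tail]
          have := List.length_pos_iff.2 htj
          omega
      obtain ⟨L', hL'h, hL'c, hL'last, hL'd⟩ :=
        ih _ (lt_of_lt_of_le hlen hN) x' t' le_rfl hterm'
      have hstep : compStep R f x x' := by
        constructor
        · intro i hi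
          by_cases h : t i = []
          · have hxF : x i ∈ F := by
              obtain ⟨s, hlast, hsF⟩ := (ht i).2
              rw [h] at hlast
              simp only [List.getLast?_singleton, Option.some.injEq] at hlast
              exact hlast ▸ hsF
            have : x' i = x i := by simp [hx', h]
            rw [this]
            exact (hterm _ hxF).1
          · have hx'i : x' i = (t i).head h := by simp [hx', hi, h]
            obtain ⟨c, r, hcr⟩ := List.exists_cons_of_ne_nil h
            have hhead : x' i = c := by rw [hx'i]; simp [hcr]
            rw [hhead]
            have hchain := (ht i).1
            rw [hcr] at hchain
            exact (List.isChain_cons_cons.1 hchain).1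
        · intro i hi
          simp [hx', hi]
      refine ⟨x :: L', rfl, ?_, ?_, fun i => ?_⟩
      · refine List.isChain_cons.mpr ?_
        refine ⟨fun b hb => ?_, hL'c⟩
        rw [hL'h] at hb
        simp only [Option.mem_def, Option.some.injEq] at hb
        exact hb ▸ hstep
      · obtain ⟨xt, hxt, hxtF⟩ := hL'last
        refine ⟨xt, ?_, hxtF⟩
        obtain ⟨c, r, rfl⟩ : ∃ c r, L' = c :: r := by
          cases L' with
          | nil => simp at hL'h
          | cons c r => exact ⟨c, r, rfl⟩
        rwa [List.getLast?_cons_cons]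
      · simp only [List.map_cons]
        have hd := hL'd i
        by_cases h : i ∈ f x ∧ t i ≠ []
        · have h2 : (x' i :: t' i) = t i := by rw [hexec i, if_pos h]
          rw [h2] at hd
          exact destutter_cons_congr (a := x i) hd
        · have h2 : (x' i :: t' i) = x i :: t i := by rw [hexec i, if_neg h]
          rw [h2] at hd
          have hh : (L'.map (fun y => y i)).head? = some (x i) := by
            rw [List.head?_map, hL'h]
            simp only [Option.map_some]
            congr 1
            simp [hx', h]
          rw [destutter_cons_stutter hh]
          exact hd
  intro π hπ
  have hne : ∀ i, π i ≠ [] := by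
    intro i h
    obtain ⟨s, hlast, _⟩ := (hπ i).2
    rw [h] at hlast
    simp at hlast
  have hdecomp : ∀ i, π i = (π i).head (hne i) :: (π i).tail :=
    fun i => (List.cons_head_tail (hne i)).symm
  obtain ⟨L, _, hc, hlast, hd⟩ := key (∑ i, ((π i).tail).length)
    (fun i => (π i).head (hne i)) (fun i => (π i).tail) le_rfl
    (fun i => (hdecomp i) ▸ hπ i)
  refine ⟨L, hc, hlast, fun i => ?_⟩
  rw [hd i, ← hdecomp i]
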